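/- Fix a real constant ξ(p) = (10α)^p for some α ≥ 1 and each integer p ≥ 0. Call a finite nonempty set S of points in a metric space 'sparse at level p' if S can be partitioned into nonempty clusters each of diameter at most ξ(p) such that the union of any two distinct clusters has diameter greater than ξ(p+1); otherwise S is 'non-sparse at level p'. If a finite nonempty set S is non-sparse at every level q = 0, 1, …, p, then S contains at least p + 2 points. -/
import Mathlib


/-- `S` is sparse at level `q` (with unit length `ξ(q) = (10α)^q`): `S` can be
partitioned into nonempty clusters, each of diameter at most `(10α)^q`, such that the
union of any two distinct clusters has diameter greater than `(10α)^{q+1}`. -/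
def SparseAtLevel {X : Type*} [MetricSpace X] [DecidableEq X] (α : ℝ)
    (S : Finset X) (q : ℕ) : Prop :=
  ∃ P : Finset (Finset X),
    (∀ C ∈ P, C.Nonempty) ∧
    (∀ C ∈ P, ∀ D ∈ P, C ≠ D → Disjoint C D) ∧
    P.biUnion id = S ∧
    (∀ C ∈ P, Metric.diam (C : Set X) ≤ (10 * α) ^ q) ∧
    (∀ C ∈ P, ∀ D ∈ P, C ≠ D →
      Metric.diam ((C : Set X) ∪ (D : Set X)) > (10 * α) ^ (q + 1))

/-- If a finite nonempty set `S` in a metric space is non-sparse at every level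
`q = 0, 1, …, p`, then `S` contains at least `p + 2` points. -/
theorem statement_16 {X : Type*} [MetricSpace X] [DecidableEq X] (α : ℝ) (hα : 1 ≤ α)
    (S : Finset X) (hS : S.Nonempty) (p : ℕ)
    (hns : ∀ q ≤ p, ¬ SparseAtLevel α S q) :
    p + 2 ≤ S.card := by
  have hone : (1:ℝ) ≤ 10 * α := by nlinarith
  have key : ∀ q, q ≤ p + 1 → ∃ P : Finset (Finset X),
      (∀ C ∈ P, C.Nonempty) ∧
      (∀ C ∈ P, ∀ D ∈ P, C ≠ D → Disjoint C D) ∧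
      P.biUnion id = S ∧
      (∀ C ∈ P, Metric.diam (C : Set X) ≤ (10 * α) ^ q) ∧
      P.card + q ≤ S.card := by
    intro q
    induction q with
    | zero =>
      intro _
      refine ⟨S.image (fun x => {x}), ?_, ?_, ?_, ?_, ?_⟩
      · intro C hC
        simp only [Finset.mem_image] at hC
        obtain ⟨x, _, rfl⟩ := hC
        exact ⟨x, Finset.mem_singleton_self x⟩
      · intro C hC D hD hne
        simp only [Finset.mem_image] at hC hD
        obtain ⟨x, _, rfl⟩ := hC
        obtain ⟨y, _, rfl⟩ := hD
        have : x ≠ y := by intro h; exact hne (by rw [h])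
        simp [Finset.disjoint_singleton, this, this.symm]
      · ext x; simp
      · intro C hC
        simp only [Finset.mem_image] at hC
        obtain ⟨x, _, rfl⟩ := hC
        simp only [Finset.coe_singleton, Metric.diam_singleton, pow_zero]
        exact zero_le_one
      · have : (S.image (fun x => ({x} : Finset X))).card = S.card :=
          Finset.card_image_of_injective _ (fun a b h => Finset.singleton_injective h)
        omega
    | succ q ih =>
      intro hq
      obtain ⟨P, hne, hdisj, hun, hdiam, hcard⟩ := ih (by omega)
      have hnsq := hns q (by omega)
      rw [SparseAtLevel] at hnsq
      push_neg at hnsq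
      obtain ⟨C, hC, D, hD, hCD, hdiamCD⟩ := hnsq P hne hdisj hun hdiam
      set P' : Finset (Finset X) := insert (C ∪ D) (P \ {C, D}) with hP'
      have hsub : ({C, D} : Finset (Finset X)) ⊆ P := by
        intro E hE
        simp only [Finset.mem_insert, Finset.mem_singleton] at hE
        rcases hE with rfl | rfl <;> assumption
      -- any member of P \ {C,D} differs from C ∪ D
      have hneqCD : ∀ E ∈ P \ ({C, D} : Finset (Finset X)), E ≠ C ∪ D := by
        intro E hE hEeq
        rw [Finset.mem_sdiff] at hE
        obtain ⟨hEP, hEnot⟩ := hE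
        simp only [Finset.mem_insert, Finset.mem_singleton, not_or] at hEnot
        obtain ⟨x, hx⟩ := hne C hC
        have hdis : Disjoint C E := hdisj C hC E hEP (fun h => hEnot.1 h.symm)
        have : x ∈ E := hEeq ▸ Finset.mem_union_left D hx
        exact (Finset.disjoint_left.mp hdis hx) this
      have hpow : (10 * α) ^ q ≤ (10 * α) ^ (q + 1) :=
        pow_le_pow_right₀ hone (Nat.le_succ q)
      refine ⟨P', ?_, ?_, ?_, ?_, ?_⟩
      · intro E hE
        rw [hP', Finset.mem_insert] at hE
        rcases hE with rfl | hE
        · obtain ⟨x, hx⟩ := hne C hC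
          exact ⟨x, Finset.mem_union_left D hx⟩
        · exact hne E (Finset.mem_sdiff.mp hE).1
      · intro E hE F hF hEF
        rw [hP', Finset.mem_insert] at hE hF
        have aux : ∀ G ∈ P \ ({C, D} : Finset (Finset X)), Disjoint (C ∪ D) G := by
          intro G hG
          rw [Finset.mem_sdiff] at hG
          obtain ⟨hGP, hGnot⟩ := hG
          simp only [Finset.mem_insert, Finset.mem_singleton, not_or] at hGnot
          rw [Finset.disjoint_union_left]
          exact ⟨hdisj C hC G hGP (fun h => hGnot.1 h.symm),
                 hdisj D hD G hGP (fun h => hGnot.2 h.symm)⟩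
        rcases hE with rfl | hE
        · rcases hF with rfl | hF
          · exact absurd rfl hEF
          · exact aux F hF
        · rcases hF with rfl | hF
          · exact (aux E hE).symm
          · exact hdisj E (Finset.mem_sdiff.mp hE).1 F (Finset.mem_sdiff.mp hF).1 hEF
      · rw [← hun]
        ext x
        simp only [Finset.mem_biUnion, id_eq, hP', Finset.mem_insert, Finset.mem_sdiff,
          Finset.mem_singleton, Finset.mem_union]
        constructor
        · rintro ⟨E, hE, hx⟩
          rcases hE with rfl | ⟨hEP, _⟩
          · rcases Finset.mem_union.mp hx with hx | hx
            · exact ⟨C, hC, hx⟩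
            · exact ⟨D, hD, hx⟩
          · exact ⟨E, hEP, hx⟩
        · rintro ⟨E, hEP, hx⟩
          by_cases hEC : E = C
          · exact ⟨C ∪ D, Or.inl rfl, Finset.mem_union_left D (hEC ▸ hx)⟩
          by_cases hED : E = D
          · exact ⟨C ∪ D, Or.inl rfl, Finset.mem_union_right C (hED ▸ hx)⟩
          · exact ⟨E, Or.inr ⟨hEP, by simp [hEC, hED]⟩, hx⟩
      · intro E hE
        rw [hP', Finset.mem_insert] at hE
        rcases hE with rfl | hE
        · rw [Finset.coe_union]
          exact hdiamCD
        · exact le_trans (hdiam E (Finset.mem_sdiff.mp hE).1) hpow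
      · have h2 : ({C, D} : Finset (Finset X)).card = 2 := by
          rw [Finset.card_insert_of_notMem (by simpa using hCD), Finset.card_singleton]
        have hsd : (P \ ({C, D} : Finset (Finset X))).card = P.card - 2 := by
          rw [Finset.card_sdiff_of_subset hsub, h2]
        have hP2 : 2 ≤ P.card := by
          calc 2 = ({C, D} : Finset (Finset X)).card := h2.symm
          _ ≤ P.card := Finset.card_le_card hsub
        have : P'.card ≤ P.card - 1 := by
          rw [hP']
          calc (insert (C ∪ D) (P \ {C, D})).card ≤ (P \ ({C, D} : Finset (Finset X))).card + 1 :=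
                Finset.card_insert_le _ _
          _ = P.card - 2 + 1 := by rw [hsd]
          _ ≤ P.card - 1 := by omega
        omega
  obtain ⟨P, hne, _, hun, _, hcard⟩ := key (p + 1) le_rfl
  have hPne : P.Nonempty := by
    obtain ⟨x, hx⟩ := hS
    rw [← hun] at hx
    obtain ⟨E, hE, _⟩ := Finset.mem_biUnion.mp hx
    exact ⟨E, hE⟩
  have := Finset.card_pos.mpr hPne
  omega
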